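/- Let p be a prime and Γ a finite p-group such that the dimension over F_p of H^1(Γ, F_p) equals the dimension over F_p of H^2(Γ, F_p) (i.e., Γ is balanced). Then H^2(Γ, ℚ_p/ℤ_p) = 0, where cohomology is taken with coefficients in ℚ_p/ℤ_p with trivial Γ-action. -/

import Mathlib

noncomputable section

/-- The image of `ℤ_p` in `ℚ_p` under the canonical inclusion, as an additive subgroup. -/
def padicIntAddSubgroup (p : ℕ) [Fact p.Prime] : AddSubgroup ℚ_[p] :=
  (PadicInt.Coe.ringHom (p := p)).toAddMonoidHom.range

/-- The p-adic numbers modulo the image of the p-adic integers: `ℚ_p/ℤ_p`. -/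
abbrev QpModZp (p : ℕ) [Fact p.Prime] : Type :=
  ℚ_[p] ⧸ padicIntAddSubgroup p

namespace Aux

variable (p : ℕ) [hp : Fact p.Prime]

/-- The quotient map. -/
def q : ℚ_[p] →+ QpModZp p := QuotientAddGroup.mk' _

lemma q_surjective : Function.Surjective (q p) := QuotientAddGroup.mk'_surjective _

lemma q_eq_zero_iff (x : ℚ_[p]) : q p x = 0 ↔ ∃ z : ℤ_[p], (z : ℚ_[p]) = x := by
  rw [q, QuotientAddGroup.mk'_apply, QuotientAddGroup.eq_zero_iff]
  rfl

lemma q_int (z : ℤ_[p]) : q p (z : ℚ_[p]) = 0 := (q_eq_zero_iff p _).2 ⟨z, rfl⟩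

lemma p_ne_zero : (p : ℚ_[p]) ≠ 0 := by
  exact_mod_cast Nat.cast_ne_zero.2 hp.out.ne_zero

/-- divisibility by p -/
lemma div (m : QpModZp p) : ∃ m', p • m' = m := by
  obtain ⟨x, rfl⟩ := q_surjective p m
  refine ⟨q p ((p : ℚ_[p])⁻¹ * x), ?_⟩
  rw [← map_nsmul]
  congr 1
  rw [nsmul_eq_mul, ← mul_assoc]
  rw [mul_inv_cancel₀ (p_ne_zero p), one_mul]

lemma pk_tors (k : ℕ) : (p ^ k) • q p ((p : ℚ_[p]) ^ k)⁻¹ = 0 := by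
  rw [← map_nsmul]
  have : (p ^ k : ℕ) • ((p : ℚ_[p]) ^ k)⁻¹ = 1 := by
    rw [nsmul_eq_mul]
    push_cast
    field_simp
    exact div_self (pow_ne_zero _ (p_ne_zero p))
  rw [this]
  simpa using q_int p 1

/-- torsion elements are multiples of `q (p^-k)` -/
lemma tors (k : ℕ) (m : QpModZp p) (hm : (p ^ k) • m = 0) :
    ∃ a : ℕ, a < p ^ k ∧ m = a • q p ((p : ℚ_[p]) ^ k)⁻¹ := by
  obtain ⟨x, rfl⟩ := q_surjective p m
  rw [← map_nsmul, q_eq_zero_iff] at hm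
  obtain ⟨z, hz⟩ := hm
  have hpk : ((p : ℚ_[p]) ^ k) ≠ 0 := pow_ne_zero _ (p_ne_zero p)
  have hz' : (z : ℚ_[p]) = (p : ℚ_[p]) ^ k * x := by
    rw [hz, nsmul_eq_mul]; push_cast; ring
  have hx : x = (z : ℚ_[p]) * ((p : ℚ_[p]) ^ k)⁻¹ := by
    rw [hz', mul_comm ((p : ℚ_[p]) ^ k) x, mul_inv_cancel_right₀ hpk]
  refine ⟨z.appr k, PadicInt.appr_lt z k, ?_⟩
  have hspec := PadicInt.appr_spec k z
  rw [Ideal.mem_span_singleton] at hspec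
  obtain ⟨w, hw⟩ := hspec
  have hzw : (z : ℚ_[p]) = (z.appr k : ℚ_[p]) + (p : ℚ_[p]) ^ k * (w : ℚ_[p]) := by
    have : z = (z.appr k : ℤ_[p]) + (p : ℤ_[p]) ^ k * w := by
      rw [← hw]; ring
    calc (z : ℚ_[p]) = (((z.appr k : ℤ_[p]) + (p : ℤ_[p]) ^ k * w : ℤ_[p]) : ℚ_[p]) := by rw [← this]
    _ = (z.appr k : ℚ_[p]) + (p : ℚ_[p]) ^ k * (w : ℚ_[p]) := by push_cast; ring
  rw [hx, hzw, add_mul, map_add]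
  have h1 : q p ((p : ℚ_[p]) ^ k * (w : ℚ_[p]) * ((p : ℚ_[p]) ^ k)⁻¹) = 0 := by
    have : (p : ℚ_[p]) ^ k * (w : ℚ_[p]) * ((p : ℚ_[p]) ^ k)⁻¹ = (w : ℚ_[p]) := by
      rw [mul_comm ((p : ℚ_[p]) ^ k) (w : ℚ_[p]), mul_inv_cancel_right₀ hpk]
    rw [this]; exact q_int p w
  rw [h1, add_zero, ← map_nsmul]
  congr 1

lemma m0_ne_zero : q p ((p : ℚ_[p]))⁻¹ ≠ 0 := by
  rw [Ne, q_eq_zero_iff]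
  rintro ⟨z, hz⟩
  have h1 : ‖(z : ℚ_[p])‖ ≤ 1 := PadicInt.norm_le_one z
  rw [hz, norm_inv, Padic.norm_p] at h1
  rw [inv_inv] at h1
  have := hp.out.one_lt
  have : (1 : ℝ) < p := by exact_mod_cast this
  linarith

end Aux

namespace Aux2

variable (p : ℕ) [hp : Fact p.Prime]
open Aux

/-- generator of the p-torsion -/
def m0 : QpModZp p := q p ((p : ℚ_[p]))⁻¹

lemma p_smul_m0 : p • m0 p = 0 := by
  have h := pk_tors p 1
  rw [pow_one, pow_one] at h
  exact h

/-- The embedding of `ZMod p` as the `p`-torsion of `ℚ_p/ℤ_p`. -/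
def e : ZMod p →+ QpModZp p :=
  ZMod.lift p ⟨zmultiplesHom _ (m0 p), by
    simp only [zmultiplesHom_apply]
    have := p_smul_m0 p
    rw [← natCast_zsmul] at this
    exact this⟩

lemma e_natCast (a : ℕ) : e p (a : ZMod p) = a • m0 p := by
  have : ((a : ℤ) : ZMod p) = (a : ZMod p) := by push_cast; rfl
  rw [← this, e, ZMod.lift_coe]
  simp [zmultiplesHom_apply]

lemma p_smul_e (a : ZMod p) : p • e p a = 0 := by
  have : a = ((a.val : ℕ) : ZMod p) := (ZMod.natCast_rightInverse a).symm
  rw [this, e_natCast, smul_comm, p_smul_m0, smul_zero]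

lemma e_injective : Function.Injective (e p) := by
  intro a b hab
  by_contra hne
  have h : e p (a - b) = 0 := by rw [map_sub, hab, sub_self]
  set c := a - b with hc
  have hc0 : c ≠ 0 := sub_ne_zero.2 hne
  have hval : c.val • m0 p = 0 := by
    have : c = ((c.val : ℕ) : ZMod p) := (ZMod.natCast_rightInverse c).symm
    rw [this, e_natCast] at h
    exact h
  have hcop : Nat.Coprime c.val p := by
    have : ¬ (p ∣ c.val) := by
      intro hdvd
      have : (c.val : ZMod p) = 0 := (ZMod.natCast_eq_zero_iff _ _).2 hdvd
      rw [ZMod.natCast_rightInverse c] at this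
      exact hc0 this
    exact ((Nat.Prime.coprime_iff_not_dvd hp.out).2 (fun h => this h)).symm
  obtain ⟨u, v, huv⟩ : ∃ u v : ℤ, u * c.val + v * p = 1 := by
    have := Nat.gcd_eq_gcd_ab c.val p
    refine ⟨Nat.gcdA c.val p, Nat.gcdB c.val p, ?_⟩
    rw [hcop] at this
    push_cast at this
    linarith [this]
  have : m0 p = 0 := by
    calc m0 p = (1 : ℤ) • m0 p := (one_smul _ _).symm
    _ = (u * c.val + v * p) • m0 p := by rw [huv]
    _ = u • ((c.val : ℤ) • m0 p) + v • ((p : ℤ) • m0 p) := by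
        rw [add_zsmul, mul_zsmul, mul_zsmul]
    _ = 0 := by
        rw [natCast_zsmul, natCast_zsmul, hval]
        have := p_smul_m0 p
        rw [this]
        simp
  exact m0_ne_zero p this

lemma e_surj_tors (m : QpModZp p) (hm : p • m = 0) : ∃ a : ZMod p, e p a = m := by
  obtain ⟨a, ha, rfl⟩ := tors p 1 m (by rw [pow_one]; exact hm)
  refine ⟨(a : ZMod p), ?_⟩
  rw [e_natCast]
  show a • q p ((p : ℚ_[p]))⁻¹ = a • q p ((p : ℚ_[p]) ^ 1)⁻¹
  rw [pow_one]

end Aux2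
open groupCohomology

namespace Aux3

open Aux Aux2

section Compat

variable {k G : Type} [CommRing k] [Group G] (A : Rep k G)

abbrev oneCocycles : Submodule k (G → A) := cocycles₁ A
abbrev twoCocycles : Submodule k (G × G → A) := cocycles₂ A
abbrev oneCoboundaries : Submodule k (oneCocycles A) :=
  (coboundaries₁ A).comap (cocycles₁ A).subtype
abbrev twoCoboundaries : Submodule k (twoCocycles A) :=
  (coboundaries₂ A).comap (cocycles₂ A).subtype
abbrev dOne : (G → A) →ₗ[k] (G × G → A) := (d₁₂ A).hom
abbrev dTwo : (G × G → A) →ₗ[k] (G × G × G → A) := (d₂₃ A).hom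
abbrev H2_π : twoCocycles A →ₗ[k] H2 A := (H2π A).hom

lemma dTwo_comp_dOne : (dTwo A).comp (dOne A) = 0 :=
  LinearMap.ext fun x => d₁₂_comp_d₂₃_apply A x

lemma mem_twoCocycles_def (f : G × G → A) :
    f ∈ twoCocycles A ↔ ∀ g h j : G,
      A.ρ g (f (h, j)) - f (g * h, j) + f (g, h * j) - f (g, h) = 0 :=
  mem_cocycles₂_def f

lemma dOne_apply (f : G → A) (g h : G) :
    dOne A f (g, h) = A.ρ g (f h) - f (g * h) + f g := rfl

lemma mem_oneCocycles_iff (f : G → A) :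
    f ∈ oneCocycles A ↔ ∀ g h : G, f (g * h) = A.ρ g (f h) + f g :=
  mem_cocycles₁_iff f

variable {A} in
lemma oneCocycles_map_one (f : oneCocycles A) : (f : G → A) 1 = 0 :=
  cocycles₁_map_one f

lemma mem_twoCoboundaries_iff (f : twoCocycles A) :
    f ∈ twoCoboundaries A ↔ ∃ x : G → A, ∀ g h : G,
      A.ρ g (x h) - x (g * h) + x g = (f : G × G → A) (g, h) := by
  show (f : G × G → A) ∈ LinearMap.range (d₁₂ A).hom ↔ _
  rw [LinearMap.mem_range]
  constructor
  · rintro ⟨x, hx⟩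
    exact ⟨x, fun g h => by rw [← hx]; rfl⟩
  · rintro ⟨x, hx⟩
    exact ⟨x, funext fun ⟨g, h⟩ => hx g h⟩

lemma H2_π_eq_iff' (x y : twoCocycles A) :
    H2_π A x = H2_π A y ↔ x - y ∈ twoCoboundaries A :=
  H2π_eq_iff x y

lemma H2_π_eq_zero_iff' (x : twoCocycles A) :
    H2_π A x = 0 ↔ x ∈ twoCoboundaries A :=
  H2π_eq_zero_iff x

end Compat

section TrivialLemmas

variable {Γ : Type} [Group Γ] {k V : Type} [CommRing k] [AddCommGroup V] [Module k V]

lemma mem_twoCocycles_trivial_iff (f : Γ × Γ → V) :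
    f ∈ twoCocycles (Rep.trivial k Γ V) ↔
      ∀ g h j : Γ, f (h, j) - f (g * h, j) + f (g, h * j) - f (g, h) = 0 := by
  rw [mem_twoCocycles_def]
  simp only [Representation.trivial_apply]

lemma dOne_trivial (u : Γ → V) (g h : Γ) :
    dOne (Rep.trivial k Γ V) u (g, h) = u h - u (g * h) + u g := by
  simp only [dOne_apply, Representation.trivial_apply]

lemma mem_oneCocycles_trivial_iff (f : Γ → V) :
    f ∈ oneCocycles (Rep.trivial k Γ V) ↔ ∀ g h : Γ, f (g * h) = f g + f h := by
  rw [mem_oneCocycles_iff]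
  constructor
  · intro H g h
    have := H g h
    simp only [Representation.trivial_apply] at this
    rw [this]; abel
  · intro H g h
    simp only [Representation.trivial_apply]
    rw [H g h]; abel

end TrivialLemmas

section Main

variable (p : ℕ) [hp : Fact p.Prime] (Γ : Type) [Group Γ] [Finite Γ]

abbrev RA : Rep ℤ Γ := Rep.trivial ℤ Γ (QpModZp p)
abbrev RB : Rep (ZMod p) Γ := Rep.trivial (ZMod p) Γ (ZMod p)

variable {Γ}

lemma e_comp_mem_twoCocycles {c : Γ × Γ → ZMod p} (hc : c ∈ twoCocycles (RB p Γ)) :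
    (fun x => e p (c x)) ∈ twoCocycles (RA p Γ) := by
  rw [mem_twoCocycles_trivial_iff] at hc ⊢
  intro g h j
  rw [← map_sub, ← map_add, ← map_sub, hc g h j, map_zero]

lemma e_comp_mem_twoCocycles' {c : Γ × Γ → ZMod p}
    (hc : (fun x => e p (c x)) ∈ twoCocycles (RA p Γ)) : c ∈ twoCocycles (RB p Γ) := by
  rw [mem_twoCocycles_trivial_iff] at hc ⊢
  intro g h j
  apply e_injective p
  rw [map_zero, map_sub, map_add, map_sub]
  exact hc g h j

lemma dOne_e_comp (v : Γ → ZMod p) :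
    dOne (RA p Γ) (fun g => e p (v g)) = fun x => e p (dOne (RB p Γ) v x) := by
  funext x
  obtain ⟨g, h⟩ := x
  rw [dOne_trivial, dOne_trivial, map_add, map_sub]

/-- Averaging: `|Γ| • f` is a coboundary for every 2-cocycle `f`. -/
lemma exists_dOne_card_smul {f : Γ × Γ → QpModZp p} (hf : f ∈ twoCocycles (RA p Γ)) :
    ∃ u : Γ → QpModZp p, dOne (RA p Γ) u = (Nat.card Γ) • f := by
  have : Fintype Γ := Fintype.ofFinite Γ
  rw [mem_twoCocycles_trivial_iff] at hf
  refine ⟨fun g => ∑ j : Γ, f (g, j), ?_⟩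
  funext x
  obtain ⟨g, h⟩ := x
  rw [dOne_trivial]
  have h1 : ∑ j : Γ, (f (h, j) - f (g * h, j) + f (g, h * j) - f (g, h)) = 0 :=
    Finset.sum_eq_zero fun j _ => hf g h j
  have h2 : ∑ j : Γ, f (g, h * j) = ∑ j : Γ, f (g, j) :=
    Equiv.sum_comp (Equiv.mulLeft h) (fun j => f (g, j))
  have h3 : ∑ j : Γ, f (g, h) = (Nat.card Γ) • f (g, h) := by
    rw [Finset.sum_const, Finset.card_univ, Nat.card_eq_fintype_card]
  rw [Finset.sum_sub_distrib, Finset.sum_add_distrib, Finset.sum_sub_distrib, h2, h3] at h1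
  rw [Pi.smul_apply, ← sub_eq_zero.1 h1]

lemma finite_T (k : ℕ) : Finite {m : QpModZp p // (p ^ k) • m = 0} := by
  refine Finite.of_surjective
    (fun i : Fin (p ^ k) => (⟨(i : ℕ) • q p ((p : ℚ_[p]) ^ k)⁻¹, by
      rw [smul_comm, pk_tors, smul_zero]⟩ : {m : QpModZp p // (p ^ k) • m = 0})) ?_
  rintro ⟨m, hm⟩
  obtain ⟨a, ha, rfl⟩ := tors p k m hm
  exact ⟨⟨a, ha⟩, rfl⟩

lemma finite_S (hΓ : IsPGroup p Γ) : Finite (oneCocycles (RA p Γ)) := by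
  obtain ⟨k, hk⟩ := IsPGroup.iff_card.1 hΓ
  have hT : Finite {m : QpModZp p // (p ^ k) • m = 0} := finite_T p k
  have key : ∀ (s : oneCocycles (RA p Γ)) (g : Γ), (p ^ k) • (s : Γ → QpModZp p) g = 0 := by
    intro s g
    have hmul := (mem_oneCocycles_trivial_iff (s : Γ → QpModZp p)).1 s.2
    have hpow : ∀ n : ℕ, (s : Γ → QpModZp p) (g ^ n) = n • (s : Γ → QpModZp p) g := by
      intro n
      induction n with
      | zero =>
          rw [pow_zero, zero_nsmul]
          exact oneCocycles_map_one s
      | succ n ih => rw [pow_succ, hmul, ih, succ_nsmul]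
    have h2 := hpow (Nat.card Γ)
    rw [pow_card_eq_one', oneCocycles_map_one, hk] at h2
    exact h2.symm
  exact Finite.of_injective
    (fun s : oneCocycles (RA p Γ) =>
      (fun g => ⟨(s : Γ → QpModZp p) g, key s g⟩ : Γ → {m : QpModZp p // (p ^ k) • m = 0}))
    (by
      intro s s' h
      ext g
      exact congrArg Subtype.val (congrFun h g))

lemma delta_ex (s : oneCocycles (RA p Γ)) :
    ∃ (t : Γ → QpModZp p) (c : twoCocycles (RB p Γ)),
      (∀ g : Γ, p • t g = (s : Γ → QpModZp p) g) ∧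
      (∀ x : Γ × Γ, e p ((c : Γ × Γ → ZMod p) x) = dOne (RA p Γ) t x) := by
  choose t ht using fun g => div p ((s : Γ → QpModZp p) g)
  have hdt : ∀ x : Γ × Γ, p • dOne (RA p Γ) t x = 0 := by
    intro x
    have h1 : dOne (RA p Γ) (fun g => p • t g) = p • dOne (RA p Γ) t :=
      map_nsmul (dOne (RA p Γ)) p t
    have h2 : (fun g => p • t g) = (s : Γ → QpModZp p) := funext ht
    have h3 : dOne (RA p Γ) (s : Γ → QpModZp p) = 0 := s.2
    calc p • dOne (RA p Γ) t x = (p • dOne (RA p Γ) t) x := rfl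
    _ = dOne (RA p Γ) (fun g => p • t g) x := by rw [h1]
    _ = 0 := by rw [h2, h3]; rfl
  choose c hc using fun x => e_surj_tors p (dOne (RA p Γ) t x) (hdt x)
  have hcoc : (fun x => e p (c x)) ∈ twoCocycles (RA p Γ) := by
    have : (fun x => e p (c x)) = dOne (RA p Γ) t := funext hc
    rw [this]
    exact LinearMap.ext_iff.1 (dTwo_comp_dOne (RA p Γ)) t
  exact ⟨t, ⟨c, e_comp_mem_twoCocycles' p hcoc⟩, ht, hc⟩

lemma delta_core (t t' : Γ → QpModZp p) (c c' : twoCocycles (RB p Γ))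
    (htt' : ∀ g : Γ, p • (t g - t' g) = 0)
    (hc : ∀ x : Γ × Γ, e p ((c : Γ × Γ → ZMod p) x) = dOne (RA p Γ) t x)
    (hc' : ∀ x : Γ × Γ, e p ((c' : Γ × Γ → ZMod p) x) = dOne (RA p Γ) t' x) :
    H2_π (RB p Γ) c = H2_π (RB p Γ) c' := by
  choose v hv using fun g => e_surj_tors p (t g - t' g) (htt' g)
  have hmem : c - c' ∈ twoCoboundaries (RB p Γ) := by
    rw [mem_twoCoboundaries_iff]
    refine ⟨v, fun g h => ?_⟩
    simp only [Representation.trivial_apply]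
    apply e_injective p
    rw [map_add, map_sub]
    rw [hv, hv, hv]
    have hcc' : ((c - c' : twoCocycles (RB p Γ)) : Γ × Γ → ZMod p) (g, h) =
        (c : Γ × Γ → ZMod p) (g, h) - (c' : Γ × Γ → ZMod p) (g, h) := rfl
    rw [hcc', map_sub, hc, hc']
    rw [dOne_trivial, dOne_trivial]
    abel
  rw [H2_π_eq_iff']
  exact hmem

/-- The connecting homomorphism `H¹(Γ, ℚ_p/ℤ_p) → H²(Γ, F_p)` (as a bare function). -/
def delta (s : oneCocycles (RA p Γ)) : H2 (RB p Γ) :=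
  H2_π (RB p Γ) (delta_ex p s).choose_spec.choose

lemma delta_spec (s : oneCocycles (RA p Γ)) (t : Γ → QpModZp p) (c : twoCocycles (RB p Γ))
    (ht : ∀ g : Γ, p • t g = (s : Γ → QpModZp p) g)
    (hc : ∀ x : Γ × Γ, e p ((c : Γ × Γ → ZMod p) x) = dOne (RA p Γ) t x) :
    delta p s = H2_π (RB p Γ) c := by
  obtain ⟨ht₀, hc₀⟩ := (delta_ex p s).choose_spec.choose_spec
  refine delta_core p _ _ _ _ ?_ hc₀ hc
  intro g
  rw [nsmul_sub, ht₀ g, ht g, sub_self]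

lemma delta_add (s s' : oneCocycles (RA p Γ)) :
    delta p (s + s') = delta p s + delta p s' := by
  obtain ⟨t, c, ht, hc⟩ := delta_ex p s
  obtain ⟨t', c', ht', hc'⟩ := delta_ex p s'
  have h1 : delta p s = H2_π (RB p Γ) c := delta_spec p s t c ht hc
  have h2 : delta p s' = H2_π (RB p Γ) c' := delta_spec p s' t' c' ht' hc'
  have h3 : delta p (s + s') = H2_π (RB p Γ) (c + c') := by
    refine delta_spec p (s + s') (t + t') (c + c') ?_ ?_
    · intro g
      have : ((s + s' : oneCocycles (RA p Γ)) : Γ → QpModZp p) g =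
          (s : Γ → QpModZp p) g + (s' : Γ → QpModZp p) g := rfl
      rw [this, Pi.add_apply, nsmul_add, ht g, ht' g]
    · intro x
      have h4 : ((c + c' : twoCocycles (RB p Γ)) : Γ × Γ → ZMod p) x =
          (c : Γ × Γ → ZMod p) x + (c' : Γ × Γ → ZMod p) x := rfl
      rw [h4, map_add, hc x, hc' x, map_add]
      rfl
  rw [h1, h2, h3, map_add]

/-- The connecting homomorphism as an `AddMonoidHom`. -/
def deltaHom : oneCocycles (RA p Γ) →+ H2 (RB p Γ) :=
  AddMonoidHom.mk' (delta p) (delta_add p)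

lemma delta_eq_zero_iff (s : oneCocycles (RA p Γ)) :
    delta p s = 0 ↔ ∃ s₀ : oneCocycles (RA p Γ), p • s₀ = s := by
  constructor
  · intro h0
    obtain ⟨t, c, ht, hc⟩ := delta_ex p s
    rw [delta_spec p s t c ht hc] at h0
    rw [H2_π_eq_zero_iff'] at h0
    rw [mem_twoCoboundaries_iff] at h0
    obtain ⟨v, hv⟩ := h0
    simp only [Representation.trivial_apply] at hv
    set t' : Γ → QpModZp p := fun g => t g - e p (v g) with ht'
    have htc : t' ∈ oneCocycles (RA p Γ) := by
      show dOne (RA p Γ) t' = 0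
      have : t' = t - fun g => e p (v g) := rfl
      rw [this, map_sub, dOne_e_comp]
      funext x
      obtain ⟨g, h⟩ := x
      rw [Pi.sub_apply, Pi.zero_apply, ← hc (g, h), dOne_trivial, map_add, map_sub]
      rw [sub_eq_zero, ← hv g h, map_add, map_sub]
    refine ⟨⟨t', htc⟩, ?_⟩
    ext g
    have : ((p • (⟨t', htc⟩ : oneCocycles (RA p Γ)) : oneCocycles (RA p Γ)) :
        Γ → QpModZp p) g = p • t' g := rfl
    rw [this, ht', nsmul_sub, p_smul_e, sub_zero, ht g]
  · rintro ⟨s₀, rfl⟩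
    refine (delta_spec p _ (s₀ : Γ → QpModZp p) 0 (fun g => rfl) ?_).trans (map_zero _)
    intro x
    have h3 : dOne (RA p Γ) (s₀ : Γ → QpModZp p) = 0 := s₀.2
    rw [h3]
    exact map_zero (e p)

/-- multiplication by `p` on 1-cocycles -/
def pmulHom : oneCocycles (RA p Γ) →+ oneCocycles (RA p Γ) :=
  AddMonoidHom.mk' (fun s => p • s) (fun a b => smul_add p a b)

lemma card_range_mul_card_ker {S H : Type} [AddCommGroup S] [AddCommGroup H] [Finite S]
    (φ : S →+ H) : Nat.card φ.range * Nat.card φ.ker = Nat.card S := by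
  have h1 : Nat.card S = Nat.card (S ⧸ φ.ker) * Nat.card φ.ker :=
    AddSubgroup.card_eq_card_quotient_mul_card_addSubgroup φ.ker
  have h2 : Nat.card (S ⧸ φ.ker) = Nat.card φ.range :=
    Nat.card_congr (QuotientAddGroup.quotientKerEquivRange φ).toEquiv
  rw [h1, h2]

lemma card_ker_pmul : Nat.card (pmulHom p (Γ := Γ)).ker = Nat.card (oneCocycles (RB p Γ)) := by
  symm
  refine Nat.card_eq_of_bijective (fun v : oneCocycles (RB p Γ) =>
    (⟨⟨fun g => e p ((v : Γ → ZMod p) g), ?_⟩, ?_⟩ : (pmulHom p (Γ := Γ)).ker)) ⟨?_, ?_⟩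
  · rw [mem_oneCocycles_trivial_iff]
    intro g h
    rw [(mem_oneCocycles_trivial_iff (v : Γ → ZMod p)).1 v.2 g h, map_add]
  · show p • (⟨fun g => e p ((v : Γ → ZMod p) g), _⟩ : oneCocycles (RA p Γ)) = 0
    ext g
    exact p_smul_e p _
  · intro v v' h
    ext g
    apply e_injective p
    exact congrFun (congrArg (fun z : (pmulHom p (Γ := Γ)).ker =>
      ((z : oneCocycles (RA p Γ)) : Γ → QpModZp p)) h) g
  · rintro ⟨s, hs⟩
    have hs' : ∀ g : Γ, p • (s : Γ → QpModZp p) g = 0 := by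
      intro g
      exact congrFun (congrArg (fun z : oneCocycles (RA p Γ) => (z : Γ → QpModZp p)) hs) g
    choose v hv using fun g => e_surj_tors p ((s : Γ → QpModZp p) g) (hs' g)
    have hvmem : v ∈ oneCocycles (RB p Γ) := by
      rw [mem_oneCocycles_trivial_iff]
      intro g h
      apply e_injective p
      rw [map_add, hv, hv, hv]
      exact (mem_oneCocycles_trivial_iff (s : Γ → QpModZp p)).1 s.2 g h
    refine ⟨⟨v, hvmem⟩, ?_⟩
    ext g
    exact hv g

lemma finite_coeB : Finite (RB p Γ) := inferInstanceAs (Finite (ZMod p))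

lemma finite_oneCocyclesB : Finite (oneCocycles (RB p Γ)) := by
  haveI := finite_coeB p (Γ := Γ)
  exact Finite.of_injective (fun v : oneCocycles (RB p Γ) => (v : Γ → ZMod p))
    (by intro a b hab; exact Subtype.ext hab)

lemma finite_twoCocyclesB : Finite (twoCocycles (RB p Γ)) := by
  haveI := finite_coeB p (Γ := Γ)
  exact Finite.of_injective (fun v : twoCocycles (RB p Γ) => (v : Γ × Γ → ZMod p))
    (by intro a b hab; exact Subtype.ext hab)

lemma finite_H1B : Finite (H1 (RB p Γ)) := by
  have := finite_oneCocyclesB p (Γ := Γ)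
  exact Finite.of_surjective _ ((ModuleCat.epi_iff_surjective (H1π (RB p Γ))).1 inferInstance)

lemma finite_H2B : Finite (H2 (RB p Γ)) := by
  have := finite_twoCocyclesB p (Γ := Γ)
  exact Finite.of_surjective _ ((ModuleCat.epi_iff_surjective (H2π (RB p Γ))).1 inferInstance)

lemma card_H1B_eq_card_H2B
    (hbal : Module.finrank (ZMod p) (groupCohomology (RB p Γ) 1) =
      Module.finrank (ZMod p) (groupCohomology (RB p Γ) 2)) :
    Nat.card (H1 (RB p Γ)) = Nat.card (H2 (RB p Γ)) := by
  have f1 : Finite (H1 (RB p Γ)) := finite_H1B p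
  have f2 : Finite (H2 (RB p Γ)) := finite_H2B p
  have e1 : groupCohomology (RB p Γ) 1 ≃ₗ[ZMod p] H1 (RB p Γ) :=
    LinearEquiv.refl _ _
  have e2 : groupCohomology (RB p Γ) 2 ≃ₗ[ZMod p] H2 (RB p Γ) :=
    LinearEquiv.refl _ _
  have hr : Module.finrank (ZMod p) (H1 (RB p Γ)) = Module.finrank (ZMod p) (H2 (RB p Γ)) := by
    rw [← e1.finrank_eq, ← e2.finrank_eq]
    exact hbal
  letI : Fintype (H1 (RB p Γ)) := Fintype.ofFinite _
  letI : Fintype (H2 (RB p Γ)) := Fintype.ofFinite _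
  rw [Nat.card_eq_fintype_card, Nat.card_eq_fintype_card]
  have c1 : Fintype.card (H1 (RB p Γ)) =
      Fintype.card (ZMod p) ^ Module.finrank (ZMod p) (H1 (RB p Γ)) :=
    Module.card_eq_pow_finrank (K := ZMod p)
  have c2 : Fintype.card (H2 (RB p Γ)) =
      Fintype.card (ZMod p) ^ Module.finrank (ZMod p) (H2 (RB p Γ)) :=
    Module.card_eq_pow_finrank (K := ZMod p)
  rw [c1, c2, hr]

lemma deltaHom_surjective (hΓ : IsPGroup p Γ)
    (hbal : Module.finrank (ZMod p) (groupCohomology (RB p Γ) 1) =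
      Module.finrank (ZMod p) (groupCohomology (RB p Γ) 2)) :
    Function.Surjective (deltaHom p (Γ := Γ)) := by
  have hfinS : Finite (oneCocycles (RA p Γ)) := finite_S p hΓ
  have hker : (deltaHom p (Γ := Γ)).ker = (pmulHom p (Γ := Γ)).range := by
    ext s
    rw [AddMonoidHom.mem_ker, AddMonoidHom.mem_range]
    exact delta_eq_zero_iff p s
  have h1 := card_range_mul_card_ker (deltaHom p (Γ := Γ))
  have h2 := card_range_mul_card_ker (pmulHom p (Γ := Γ))
  rw [hker] at h1
  haveI : Nonempty (pmulHom p (Γ := Γ)).range := ⟨⟨0, 0, map_zero _⟩⟩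
  haveI : Finite (pmulHom p (Γ := Γ)).range :=
    Finite.of_injective (fun z : (pmulHom p (Γ := Γ)).range => (z : oneCocycles (RA p Γ)))
      (by intro a b hab; exact Subtype.ext hab)
  have hpos : 0 < Nat.card (pmulHom p (Γ := Γ)).range := Nat.card_pos
  have h3 : Nat.card (deltaHom p (Γ := Γ)).range = Nat.card (pmulHom p (Γ := Γ)).ker :=
    Nat.eq_of_mul_eq_mul_left hpos (by rw [Nat.mul_comm _ (Nat.card _)] at h1; rw [h1, h2])
  have h4 : Nat.card (deltaHom p (Γ := Γ)).range = Nat.card (H2 (RB p Γ)) := by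
    rw [h3, card_ker_pmul]
    have h5 : Nat.card (oneCocycles (RB p Γ)) = Nat.card (H1 (RB p Γ)) :=
      Nat.card_congr ((cocycles₁IsoOfIsTrivial (RB p Γ)).toLinearEquiv.toEquiv.trans
        (H1IsoOfIsTrivial (RB p Γ)).toLinearEquiv.symm.toEquiv)
    rw [h5, card_H1B_eq_card_H2B p hbal]
  have hfin2 : Finite (H2 (RB p Γ)) := finite_H2B p
  have htop : (deltaHom p (Γ := Γ)).range = ⊤ := AddSubgroup.eq_top_of_card_eq _ h4
  intro y
  have : y ∈ (deltaHom p (Γ := Γ)).range := htop ▸ AddSubgroup.mem_top y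
  exact this

lemma key2 (hΓ : IsPGroup p Γ)
    (hbal : Module.finrank (ZMod p) (groupCohomology (RB p Γ) 1) =
      Module.finrank (ZMod p) (groupCohomology (RB p Γ) 2))
    (c : twoCocycles (RB p Γ)) :
    ∃ u : Γ → QpModZp p, dOne (RA p Γ) u = fun x => e p ((c : Γ × Γ → ZMod p) x) := by
  obtain ⟨s, hs⟩ := deltaHom_surjective p hΓ hbal (H2_π (RB p Γ) c)
  obtain ⟨t, c', ht, hc'⟩ := delta_ex p s
  have h1 : H2_π (RB p Γ) c' = H2_π (RB p Γ) c := by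
    rw [← delta_spec p s t c' ht hc']
    exact hs
  rw [H2_π_eq_iff'] at h1
  rw [mem_twoCoboundaries_iff] at h1
  obtain ⟨v, hv⟩ := h1
  simp only [Representation.trivial_apply] at hv
  refine ⟨t - fun g => e p (v g), ?_⟩
  rw [map_sub, dOne_e_comp]
  funext x
  obtain ⟨g, h⟩ := x
  rw [Pi.sub_apply]
  have h2 : ((c' - c : twoCocycles (RB p Γ)) : Γ × Γ → ZMod p) (g, h) =
      (c' : Γ × Γ → ZMod p) (g, h) - (c : Γ × Γ → ZMod p) (g, h) := rfl
  have h3 := hv g h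
  rw [h2] at h3
  have h4 : e p ((dOne (RB p Γ) v) (g, h)) =
      e p ((c' : Γ × Γ → ZMod p) (g, h)) - e p ((c : Γ × Γ → ZMod p) (g, h)) := by
    rw [dOne_trivial, h3, map_sub]
  rw [h4, hc' (g, h)]
  exact sub_sub_cancel _ _

lemma pstep (hΓ : IsPGroup p Γ)
    (hbal : Module.finrank (ZMod p) (groupCohomology (RB p Γ) 1) =
      Module.finrank (ZMod p) (groupCohomology (RB p Γ) 2))
    (f : twoCocycles (RA p Γ))
    (h : ∃ u : Γ → QpModZp p, dOne (RA p Γ) u = p • (f : Γ × Γ → QpModZp p)) :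
    ∃ u' : Γ → QpModZp p, dOne (RA p Γ) u' = (f : Γ × Γ → QpModZp p) := by
  obtain ⟨u, hu⟩ := h
  choose w hw using fun g => div p (u g)
  set g0 : Γ × Γ → QpModZp p := fun x => (f : Γ × Γ → QpModZp p) x - dOne (RA p Γ) w x with hg0
  have hg0tors : ∀ x : Γ × Γ, p • g0 x = 0 := by
    intro x
    have h1 : dOne (RA p Γ) (fun g => p • w g) = p • dOne (RA p Γ) w :=
      map_nsmul (dOne (RA p Γ)) p w
    have h2 : (fun g => p • w g) = u := funext hw
    have h3 : p • dOne (RA p Γ) w x = dOne (RA p Γ) u x := by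
      rw [← h2, h1]
      rfl
    rw [hg0, nsmul_sub, h3, hu]
    rw [Pi.smul_apply, sub_self]
  choose c hcfun using fun x => e_surj_tors p (g0 x) (hg0tors x)
  have hg0mem : g0 ∈ twoCocycles (RA p Γ) := by
    have hd : dOne (RA p Γ) w ∈ twoCocycles (RA p Γ) :=
      LinearMap.ext_iff.1 (dTwo_comp_dOne (RA p Γ)) w
    exact Submodule.sub_mem _ f.2 hd
  have hcmem : c ∈ twoCocycles (RB p Γ) := by
    apply e_comp_mem_twoCocycles' p
    have : (fun x => e p (c x)) = g0 := funext hcfun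
    rw [this]
    exact hg0mem
  obtain ⟨u₂, hu₂⟩ := key2 p hΓ hbal ⟨c, hcmem⟩
  refine ⟨u₂ + w, ?_⟩
  rw [map_add, hu₂]
  funext x
  rw [Pi.add_apply]
  have h5 : e p (((⟨c, hcmem⟩ : twoCocycles (RB p Γ)) : Γ × Γ → ZMod p) x) = g0 x := hcfun x
  rw [h5, hg0]
  exact sub_add_cancel _ _

lemma reduce (hΓ : IsPGroup p Γ)
    (hbal : Module.finrank (ZMod p) (groupCohomology (RB p Γ) 1) =
      Module.finrank (ZMod p) (groupCohomology (RB p Γ) 2)) :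
    ∀ (j : ℕ) (f : twoCocycles (RA p Γ)),
      (∃ u : Γ → QpModZp p, dOne (RA p Γ) u = (p ^ j) • (f : Γ × Γ → QpModZp p)) →
      ∃ u : Γ → QpModZp p, dOne (RA p Γ) u = (f : Γ × Γ → QpModZp p) := by
  intro j
  induction j with
  | zero =>
      intro f hf
      obtain ⟨u, hu⟩ := hf
      exact ⟨u, by rw [hu, pow_zero, one_smul]⟩
  | succ j ih =>
      intro f hf
      obtain ⟨u, hu⟩ := hf
      have hmem : (p ^ j) • (f : Γ × Γ → QpModZp p) ∈ twoCocycles (RA p Γ) :=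
        Submodule.smul_of_tower_mem _ (p ^ j) f.2
      have h1 : ∃ u' : Γ → QpModZp p, dOne (RA p Γ) u' =
          ((⟨(p ^ j) • (f : Γ × Γ → QpModZp p), hmem⟩ :
            twoCocycles (RA p Γ)) : Γ × Γ → QpModZp p) := by
        apply pstep p hΓ hbal
        refine ⟨u, ?_⟩
        rw [hu]
        show (p ^ (j + 1)) • (f : Γ × Γ → QpModZp p) =
          p • ((p ^ j) • (f : Γ × Γ → QpModZp p))
        rw [← mul_smul, pow_succ']
      obtain ⟨u', hu'⟩ := h1
      exact ih f ⟨u', hu'⟩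

lemma all_coboundary (hΓ : IsPGroup p Γ)
    (hbal : Module.finrank (ZMod p) (groupCohomology (RB p Γ) 1) =
      Module.finrank (ZMod p) (groupCohomology (RB p Γ) 2))
    (f : twoCocycles (RA p Γ)) :
    ∃ u : Γ → QpModZp p, dOne (RA p Γ) u = (f : Γ × Γ → QpModZp p) := by
  obtain ⟨k, hk⟩ := IsPGroup.iff_card.1 hΓ
  obtain ⟨u, hu⟩ := exists_dOne_card_smul p f.2
  refine reduce p hΓ hbal k f ⟨u, ?_⟩
  rw [hu, hk]
  rfl

end Main

end Aux3

/-- for a prime `p` and a balanced finite `p`-group `Γ` (i.e. one with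
`dim_{F_p} H¹(Γ, F_p) = dim_{F_p} H²(Γ, F_p)`), the cohomology group `H²(Γ, ℚ_p/ℤ_p)`,
with coefficients in `ℚ_p/ℤ_p` with trivial `Γ`-action, vanishes. -/
theorem h2_qpModZp_eq_zero_of_balanced (p : ℕ) [Fact p.Prime]
    (Γ : Type) [Group Γ] [Finite Γ] (hΓ : IsPGroup p Γ)
    (hbal : Module.finrank (ZMod p) (groupCohomology (Rep.trivial (ZMod p) Γ (ZMod p)) 1) =
      Module.finrank (ZMod p) (groupCohomology (Rep.trivial (ZMod p) Γ (ZMod p)) 2)) :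
    ∀ x : groupCohomology (Rep.trivial ℤ Γ (QpModZp p)) 2, x = 0 := by
  intro x
  have hAll : ∀ y : groupCohomology.H2 (Aux3.RA p Γ), y = 0 := by
    intro y
    obtain ⟨f, rfl⟩ := (ModuleCat.epi_iff_surjective (groupCohomology.H2π (Aux3.RA p Γ))).1
      inferInstance y
    show Aux3.H2_π _ f = 0
    rw [Aux3.H2_π_eq_zero_iff']
    obtain ⟨u, hu⟩ := Aux3.all_coboundary p hΓ hbal f
    rw [Aux3.mem_twoCoboundaries_iff]
    refine ⟨u, fun g h => ?_⟩
    simp only [Representation.trivial_apply]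
    have h1 := congrFun hu (g, h)
    rw [Aux3.dOne_trivial] at h1
    exact h1
  have L := LinearEquiv.refl ℤ (groupCohomology.H2 (Aux3.RA p Γ))
  have h0 : L x = 0 := hAll _
  exact L.map_eq_zero_iff.1 h0
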